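/- Let R : ℝ × ℝ → (0, ∞) be C¹ in (x, t), and let V_x(x, r, t) and V_r(x, r, t) be C¹ functions defined for 0 ≤ r ≤ R(x, t). Assume the incompressibility condition ∂_r(r V_r) + r ∂_x V_x = 0 holds for all 0 < r < R(x, t), and the streamline boundary condition ∂_t R + V_x(x, R(x,t), t) ∂_x R = V_r(x, R(x,t), t) holds for all (x, t). Then the averaged incompressibility relation ∂_t(R²) + ∂_x(R² ⟨V_x⟩) = 0 holds, where ⟨V_x⟩(x, t) = (2/R(x,t)²) ∫₀^{R(x,t)} V_x(x, r, t) r dr. -/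

import Mathlib

open intervalIntegral MeasureTheory

/-- Derivative of an interval integral with moving right endpoint, jointly in
(parameter, endpoint), at a point where the endpoint equals the lower limit. -/
lemma aux_endpoint (f : ℝ → ℝ → ℝ) (hf : Continuous fun p : ℝ × ℝ => f p.1 p.2)
    (x b : ℝ) :
    HasFDerivAt (fun p : ℝ × ℝ => ∫ r in b..p.2, f p.1 r)
      (f x b • (ContinuousLinearMap.snd ℝ ℝ ℝ)) (x, b) := by
  rw [hasFDerivAt_iff_isLittleO_nhds_zero, Asymptotics.isLittleO_iff]
  intro c hc
  rcases Metric.continuousAt_iff.1 hf.continuousAt c hc with ⟨δ, hδ, hball⟩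
  filter_upwards [Metric.ball_mem_nhds (0 : ℝ × ℝ) hδ] with h hh
  rw [Metric.mem_ball, dist_zero_right] at hh
  have hint1 : IntervalIntegrable (fun r => f (x + h.1) r) volume b (b + h.2) :=
    (hf.comp (continuous_const.prodMk continuous_id)).intervalIntegrable _ _
  have key : (fun p : ℝ × ℝ => ∫ r in b..p.2, f p.1 r) ((x, b) + h)
      - (fun p : ℝ × ℝ => ∫ r in b..p.2, f p.1 r) (x, b)
      - (f x b • (ContinuousLinearMap.snd ℝ ℝ ℝ)) h
      = ∫ r in b..(b + h.2), (f (x + h.1) r - f x b) := by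
    rw [intervalIntegral.integral_sub hint1 (intervalIntegrable_const)]
    simp [intervalIntegral.integral_const, smul_eq_mul]
    ring
  rw [key]
  have hbound : ∀ r ∈ Set.uIoc b (b + h.2), ‖f (x + h.1) r - f x b‖ ≤ c := by
    intro r hr
    have hrb : |r - b| ≤ |h.2| := by
      rcases Set.mem_uIoc.1 hr with ⟨h1, h2⟩ | ⟨h1, h2⟩
      · rw [abs_le]
        constructor <;>
          [linarith [neg_abs_le h.2, abs_nonneg h.2]; linarith [le_abs_self h.2, abs_nonneg h.2]]
      · rw [abs_le]
        constructor <;>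
          [linarith [neg_abs_le h.2, abs_nonneg h.2]; linarith [le_abs_self h.2, abs_nonneg h.2]]
    have hd : dist ((x + h.1, r) : ℝ × ℝ) (x, b) < δ := by
      rw [Prod.dist_eq]
      have h1 : dist (x + h.1) x = |h.1| := by rw [Real.dist_eq]; ring_nf
      have h2 : dist r b = |r - b| := Real.dist_eq r b
      have hn : ‖h‖ = max ‖h.1‖ ‖h.2‖ := Prod.norm_def h
      rw [h1, h2]
      calc max |h.1| |r - b| ≤ max |h.1| |h.2| := max_le_max le_rfl hrb
        _ = ‖h‖ := by rw [hn]; rfl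
        _ < δ := hh
    have := hball hd
    rw [Real.dist_eq] at this
    exact le_of_lt this
  calc ‖∫ r in b..(b + h.2), (f (x + h.1) r - f x b)‖
      ≤ c * |(b + h.2) - b| := intervalIntegral.norm_integral_le_of_norm_le_const hbound
    _ = c * |h.2| := by ring_nf
    _ ≤ c * ‖h‖ := by
        apply mul_le_mul_of_nonneg_left _ hc.le
        simpa using norm_snd_le h

/-- Averaged incompressibility relation. If the (C¹, positive) radius
`R(x,t)`, the C¹ axial velocity `Vx(x,r,t)` and radial velocity `Vr(x,r,t)` satisfy the
incompressibility condition `∂_r(r V_r) + r ∂_x V_x = 0` for `0 < r < R(x,t)` and the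
streamline boundary condition `∂_t R + V_x(x,R,t) ∂_x R = V_r(x,R,t)`, then
`∂_t(R²) + ∂_x(R² ⟨V_x⟩) = 0`, where `⟨V_x⟩(x,t) = (2/R²) ∫₀ᴿ V_x(x,r,t) r dr`. -/
theorem averaged_incompressibility
    (R : ℝ → ℝ → ℝ) (Vx Vr : ℝ → ℝ → ℝ → ℝ)
    (hRpos : ∀ x t, 0 < R x t)
    (hR : ContDiff ℝ 1 (fun p : ℝ × ℝ => R p.1 p.2))
    (hVx : ContDiff ℝ 1 (fun p : ℝ × ℝ × ℝ => Vx p.1 p.2.1 p.2.2))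
    (hVr : ContDiff ℝ 1 (fun p : ℝ × ℝ × ℝ => Vr p.1 p.2.1 p.2.2))
    (hincomp : ∀ x t r, 0 < r → r < R x t →
      deriv (fun r' => r' * Vr x r' t) r + r * deriv (fun x' => Vx x' r t) x = 0)
    (hstream : ∀ x t,
      deriv (fun t' => R x t') t + Vx x (R x t) t * deriv (fun x' => R x' t) x
        = Vr x (R x t) t) :
    ∀ x t,
      deriv (fun t' => (R x t') ^ 2) t
        + deriv (fun x' => (R x' t) ^ 2 *
            ((2 / (R x' t) ^ 2) * ∫ r in (0:ℝ)..(R x' t), Vx x' r t * r)) x = 0 := by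
  intro x t
  have hR0 : 0 < R x t := hRpos x t
  -- continuity facts
  have hVxc : Continuous (fun p : ℝ × ℝ × ℝ => Vx p.1 p.2.1 p.2.2) := hVx.continuous
  have hf : Continuous fun p : ℝ × ℝ => Vx p.1 p.2 t * p.2 := by
    have h1 : Continuous fun p : ℝ × ℝ => Vx p.1 p.2 t :=
      hVxc.comp (continuous_fst.prodMk (continuous_snd.prodMk continuous_const))
    exact h1.mul continuous_snd
  -- derivatives of R
  have hRdiff := hR.differentiable one_ne_zero
  have hRx : HasDerivAt (fun x' => R x' t) (deriv (fun x' => R x' t) x) x := by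
    have h1 : DifferentiableAt ℝ (fun x' : ℝ => (x', t)) x :=
      differentiableAt_id.prodMk (differentiableAt_const t)
    have h2 : DifferentiableAt ℝ (fun x' => R x' t) x := ((hRdiff (x, t)).comp x h1 :)
    exact h2.hasDerivAt
  have hRt : HasDerivAt (fun t' => R x t') (deriv (fun t' => R x t') t) t := by
    have h1 : DifferentiableAt ℝ (fun t' : ℝ => (x, t')) t :=
      (differentiableAt_const x).prodMk differentiableAt_id
    have h2 : DifferentiableAt ℝ (fun t' => R x t') t := ((hRdiff (x, t)).comp t h1 :)
    exact h2.hasDerivAt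
  -- the partial-x derivative of Vx via fderiv
  have hfderiv : Continuous (fun p : ℝ × ℝ × ℝ =>
      fderiv ℝ (fun q : ℝ × ℝ × ℝ => Vx q.1 q.2.1 q.2.2) p) := hVx.continuous_fderiv one_ne_zero
  have hA : Continuous (fun p : ℝ × ℝ × ℝ =>
      fderiv ℝ (fun q : ℝ × ℝ × ℝ => Vx q.1 q.2.1 q.2.2) p ((1:ℝ), (0:ℝ×ℝ))) :=
    hfderiv.clm_apply continuous_const
  have hVxderiv : ∀ y r : ℝ, HasDerivAt (fun y' => Vx y' r t)
      (fderiv ℝ (fun q : ℝ × ℝ × ℝ => Vx q.1 q.2.1 q.2.2) (y, r, t) ((1:ℝ), (0:ℝ×ℝ))) y := by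
    intro y r
    have h1 : HasDerivAt (fun y' : ℝ => (y', (r, t))) ((1:ℝ), (0:ℝ×ℝ)) y :=
      (hasDerivAt_id y).prodMk (hasDerivAt_const y ((r, t)))
    have h2 := (hVx.differentiable one_ne_zero (y, r, t)).hasFDerivAt
    exact h2.comp_hasDerivAt y h1
  -- bound for the partial derivative on a compact set
  obtain ⟨C, hC⟩ := IsCompact.exists_bound_of_continuousOn
    ((isCompact_closedBall x 1).prod ((isCompact_Icc (a := (0:ℝ)) (b := R x t)).prod
      isCompact_singleton)) hA.continuousOn
  -- derivative of the fixed-endpoint integral in the parameter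
  have hG1 : HasDerivAt (fun y => ∫ r in (0:ℝ)..(R x t), Vx y r t * r)
      (∫ r in (0:ℝ)..(R x t),
        fderiv ℝ (fun q : ℝ × ℝ × ℝ => Vx q.1 q.2.1 q.2.2) (x, r, t) ((1:ℝ), (0:ℝ×ℝ)) * r) x := by
    refine (intervalIntegral.hasDerivAt_integral_of_dominated_loc_of_deriv_le
      (F' := fun y r =>
        fderiv ℝ (fun q : ℝ × ℝ × ℝ => Vx q.1 q.2.1 q.2.2) (y, r, t) ((1:ℝ), (0:ℝ×ℝ)) * r)
      (bound := fun _ => |C| * R x t) (Metric.ball_mem_nhds x one_pos) ?_ ?_ ?_ ?_ ?_ ?_).2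
    · exact Filter.Eventually.of_forall fun y =>
        ((hf.comp (continuous_const.prodMk continuous_id)).aestronglyMeasurable)
    · exact (hf.comp (continuous_const.prodMk continuous_id)).intervalIntegrable _ _
    · exact ((hA.comp (continuous_const.prodMk (continuous_id.prodMk
        continuous_const))).mul continuous_id).aestronglyMeasurable
    · refine Filter.Eventually.of_forall fun r hr y hy => ?_
      have hrI : r ∈ Set.Ioc 0 (R x t) := by rwa [Set.uIoc_of_le hR0.le] at hr
      have hmem : ((y, r, t) : ℝ × ℝ × ℝ) ∈
          Metric.closedBall x 1 ×ˢ (Set.Icc 0 (R x t) ×ˢ ({t} : Set ℝ)) :=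
        ⟨Metric.ball_subset_closedBall hy, ⟨⟨hrI.1.le, hrI.2⟩, rfl⟩⟩
      have h1 := hC _ hmem
      have h2 : |r| ≤ R x t := by
        rw [abs_of_pos hrI.1]; exact hrI.2
      calc ‖fderiv ℝ (fun q : ℝ × ℝ × ℝ => Vx q.1 q.2.1 q.2.2) (y, r, t)
              ((1:ℝ), (0:ℝ×ℝ)) * r‖
          = ‖fderiv ℝ (fun q : ℝ × ℝ × ℝ => Vx q.1 q.2.1 q.2.2) (y, r, t)
              ((1:ℝ), (0:ℝ×ℝ))‖ * |r| := by rw [norm_mul]; rfl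
        _ ≤ |C| * R x t :=
            mul_le_mul (h1.trans (le_abs_self C)) h2 (abs_nonneg r) (abs_nonneg C)
    · exact intervalIntegrable_const
    · exact Filter.Eventually.of_forall fun r hr y hy => (hVxderiv y r).mul_const r
  -- evaluate that integral using incompressibility and FTC
  have hgC : ContDiff ℝ 1 (fun r : ℝ => r * Vr x r t) := by
    have h1 : ContDiff ℝ 1 (fun r : ℝ => Vr x r t) :=
      hVr.comp (contDiff_const.prodMk (contDiff_id.prodMk contDiff_const))
    exact contDiff_id.mul h1
  have hFTC : ∫ r in (0:ℝ)..(R x t), deriv (fun r' => r' * Vr x r' t) r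
      = R x t * Vr x (R x t) t := by
    rw [intervalIntegral.integral_deriv_eq_sub
      (fun r _ => (hgC.differentiable one_ne_zero).differentiableAt)
      ((hgC.continuous_deriv le_rfl).intervalIntegrable _ _)]
    simp
  have hIeq : (∫ r in (0:ℝ)..(R x t),
      fderiv ℝ (fun q : ℝ × ℝ × ℝ => Vx q.1 q.2.1 q.2.2) (x, r, t) ((1:ℝ), (0:ℝ×ℝ)) * r)
      = -(R x t * Vr x (R x t) t) := by
    have hne : ∀ᵐ r : ℝ, r ≠ R x t := by
      have h0 : (volume : Measure ℝ) {R x t} = 0 := measure_singleton _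
      rw [MeasureTheory.ae_iff]
      simp [Set.setOf_eq_eq_singleton, h0]
    have hcong : (∫ r in (0:ℝ)..(R x t),
        fderiv ℝ (fun q : ℝ × ℝ × ℝ => Vx q.1 q.2.1 q.2.2) (x, r, t) ((1:ℝ), (0:ℝ×ℝ)) * r)
        = ∫ r in (0:ℝ)..(R x t), -(deriv (fun r' => r' * Vr x r' t) r) := by
      apply intervalIntegral.integral_congr_ae
      filter_upwards [hne] with r hrne hr
      have hrI : r ∈ Set.Ioc 0 (R x t) := by rwa [Set.uIoc_of_le hR0.le] at hr
      have hrlt : r < R x t := lt_of_le_of_ne hrI.2 hrne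
      have h0 := hincomp x t r hrI.1 hrlt
      have hd : deriv (fun x' => Vx x' r t) x
          = fderiv ℝ (fun q : ℝ × ℝ × ℝ => Vx q.1 q.2.1 q.2.2) (x, r, t) ((1:ℝ), (0:ℝ×ℝ)) :=
        (hVxderiv x r).deriv
      rw [hd] at h0
      linear_combination h0
    rw [hcong, intervalIntegral.integral_neg, hFTC]
  rw [hIeq] at hG1
  -- derivative of the moving-endpoint part
  have hΦ := aux_endpoint (fun y r => Vx y r t * r) hf x (R x t)
  have hγ : HasDerivAt (fun x' => ((x', R x' t) : ℝ × ℝ))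
      ((1:ℝ), deriv (fun x' => R x' t) x) x := (hasDerivAt_id x).prodMk hRx
  have hG2 : HasDerivAt (fun x' => ∫ r in (R x t)..(R x' t), Vx x' r t * r)
      ((Vx x (R x t) t * R x t) * deriv (fun x' => R x' t) x) x := by
    have h1 := hΦ.comp_hasDerivAt x hγ
    simpa [Function.comp_def] using h1
  -- splitting the integral
  have hsplit : (fun x' => ∫ r in (0:ℝ)..(R x' t), Vx x' r t * r)
      = fun x' => (∫ r in (0:ℝ)..(R x t), Vx x' r t * r)
          + ∫ r in (R x t)..(R x' t), Vx x' r t * r := by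
    funext x'
    have hcont : Continuous fun r => Vx x' r t * r :=
      hf.comp (continuous_const.prodMk continuous_id)
    exact (intervalIntegral.integral_add_adjacent_intervals
      (hcont.intervalIntegrable _ _) (hcont.intervalIntegrable _ _)).symm
  have hI : HasDerivAt (fun x' => ∫ r in (0:ℝ)..(R x' t), Vx x' r t * r)
      (-(R x t * Vr x (R x t) t)
        + (Vx x (R x t) t * R x t) * deriv (fun x' => R x' t) x) x := by
    rw [hsplit]; exact hG1.add hG2
  -- rewrite the second deriv term
  have hfun : (fun x' => (R x' t) ^ 2 *
      ((2 / (R x' t) ^ 2) * ∫ r in (0:ℝ)..(R x' t), Vx x' r t * r))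
      = fun x' => 2 * ∫ r in (0:ℝ)..(R x' t), Vx x' r t * r := by
    funext x'
    have h := (hRpos x' t).ne'
    field_simp
  have e2 : deriv (fun x' => (R x' t) ^ 2 *
      ((2 / (R x' t) ^ 2) * ∫ r in (0:ℝ)..(R x' t), Vx x' r t * r)) x
      = 2 * (-(R x t * Vr x (R x t) t)
          + (Vx x (R x t) t * R x t) * deriv (fun x' => R x' t) x) := by
    rw [hfun]
    exact (hI.const_mul 2).deriv
  have e1 : deriv (fun t' => (R x t') ^ 2) t
      = 2 * R x t * deriv (fun t' => R x t') t := by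
    rw [(hRt.fun_pow 2).deriv]
    push_cast
    ring
  rw [e1, e2]
  have hs := hstream x t
  linear_combination (2 * R x t) * hs
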